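/- Let X be a nonempty compact metric space in which every pair of points is joined by a geodesic, i.e. for all x, y ∈ X there exists γ : [0, dist(x,y)] → X with γ(0) = x, γ(dist(x,y)) = y and dist(γ(s), γ(t)) = |s − t| for all s, t. Let Y be a metric space and f : X → Y a Lipschitz map, with L = L_f(X) its (least) global Lipschitz constant. Then the maximum stretch set λ_f = { x ∈ X : L_f(x) = L } is nonempty and closed. -/

import Mathlib

open Metric Set

/-- The Lipschitz constant of `f` on a set `K`, valued in `[0,∞]`. -/
noncomputable def lipConstOn {X Y : Type*} [MetricSpace X] [MetricSpace Y]
    (f : X → Y) (K : Set X) : ENNReal :=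
  sInf { L : ENNReal | ∀ x ∈ K, ∀ y ∈ K, edist (f x) (f y) ≤ L * edist x y }

/-- The local Lipschitz constant of `f` at `x`. -/
noncomputable def locLipConst {X Y : Type*} [MetricSpace X] [MetricSpace Y]
    (f : X → Y) (x : X) : ENNReal :=
  ⨅ (r : ℝ) (_ : 0 < r), lipConstOn f (ball x r)

open Metric Set

section Helpers
variable {X Y : Type*} [MetricSpace X] [MetricSpace Y]

lemma lipConstOn_def (f : X → Y) (K : Set X) :
    lipConstOn f K = sInf { L : ENNReal | ∀ x ∈ K, ∀ y ∈ K, edist (f x) (f y) ≤ L * edist x y } := rfl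

lemma lipConstOn_mono (f : X → Y) {K K' : Set X} (h : K ⊆ K') :
    lipConstOn f K ≤ lipConstOn f K' :=
  sInf_le_sInf fun L hL x hx y hy => hL x (h hx) y (h hy)

lemma locLipConst_le (f : X → Y) (x : X) :
    locLipConst f x ≤ lipConstOn f Set.univ := by
  refine iInf_le_of_le 1 (iInf_le_of_le one_pos ?_)
  exact lipConstOn_mono f (subset_univ _)

lemma le_lipConstOn_of_pair (f : X → Y) {K : Set X} {a b : X} (ha : a ∈ K) (hb : b ∈ K)
    {c : ENNReal} (h : c * edist a b < edist (f a) (f b)) : c ≤ lipConstOn f K := by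
  refine le_sInf fun L' hL' => ?_
  have h2 := hL' a ha b hb
  have hab : a ≠ b := by rintro rfl; simp at h
  have he0 : edist a b ≠ 0 := fun h0 => hab (edist_eq_zero.mp h0)
  have := lt_of_lt_of_le h h2
  exact le_of_lt ((ENNReal.mul_left_strictMono he0 (edist_ne_top a b)).lt_iff_lt.mp this)

end Helpers
section Subdiv
variable {X Y : Type*} [MetricSpace X] [MetricSpace Y]

lemma halve
    (hgeo : ∀ x y : X, ∃ γ : ℝ → X, γ 0 = x ∧ γ (dist x y) = y ∧
      ∀ s ∈ Icc (0 : ℝ) (dist x y), ∀ t ∈ Icc (0 : ℝ) (dist x y),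
        dist (γ s) (γ t) = |s - t|)
    (f : X → Y) (c : ENNReal) {x y : X}
    (h : c * edist x y < edist (f x) (f y)) :
    ∃ a b : X, c * edist a b < edist (f a) (f b) ∧ dist a b ≤ dist x y / 2 := by
  have hxy : x ≠ y := by rintro rfl; simp at h
  have hd : 0 < dist x y := dist_pos.mpr hxy
  set d := dist x y with hdd
  obtain ⟨γ, h0, h1, hiso⟩ := hgeo x y
  set m := γ (d / 2) with hm
  have mem0 : (0:ℝ) ∈ Icc (0:ℝ) d := ⟨le_refl _, le_of_lt hd⟩
  have memh : d / 2 ∈ Icc (0:ℝ) d := ⟨by linarith, by linarith⟩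
  have memd : d ∈ Icc (0:ℝ) d := ⟨le_of_lt hd, le_refl _⟩
  have hxm : dist x m = d / 2 := by
    have := hiso 0 mem0 (d/2) memh
    rw [h0] at this
    rw [this]; rw [abs_of_nonpos (by linarith)]; ring
  have hmy : dist m y = d / 2 := by
    have := hiso (d/2) memh d memd
    rw [h1] at this
    rw [this]; rw [abs_of_nonpos (by linarith)]; ring
  have hsum : edist x m + edist m y = edist x y := by
    rw [edist_dist, edist_dist, edist_dist, hxm, hmy, ← ENNReal.ofReal_add (by linarith) (by linarith)]
    norm_num [hdd]
  by_contra hcon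
  push_neg at hcon
  have h1' : edist (f x) (f m) ≤ c * edist x m := by
    by_contra hh
    push_neg at hh
    have := hcon x m hh; rw [hxm] at this; exact lt_irrefl _ this
  have h2' : edist (f m) (f y) ≤ c * edist m y := by
    by_contra hh
    push_neg at hh
    have := hcon m y hh; rw [hmy] at this; exact lt_irrefl _ this
  have : edist (f x) (f y) ≤ c * edist x y := by
    calc edist (f x) (f y) ≤ edist (f x) (f m) + edist (f m) (f y) := edist_triangle _ _ _
    _ ≤ c * edist x m + c * edist m y := add_le_add h1' h2'
    _ = c * (edist x m + edist m y) := (mul_add _ _ _).symm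
    _ = c * edist x y := by rw [hsum]
  exact absurd this (not_le.mpr h)

lemma shrink
    (hgeo : ∀ x y : X, ∃ γ : ℝ → X, γ 0 = x ∧ γ (dist x y) = y ∧
      ∀ s ∈ Icc (0 : ℝ) (dist x y), ∀ t ∈ Icc (0 : ℝ) (dist x y),
        dist (γ s) (γ t) = |s - t|)
    (f : X → Y) (c : ENNReal) {x y : X}
    (h : c * edist x y < edist (f x) (f y)) {δ : ℝ} (hδ : 0 < δ) :
    ∃ a b : X, c * edist a b < edist (f a) (f b) ∧ dist a b ≤ δ := by
  have key : ∀ k : ℕ, ∃ a b : X, c * edist a b < edist (f a) (f b) ∧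
      dist a b ≤ dist x y / 2 ^ k := by
    intro k
    induction k with
    | zero => exact ⟨x, y, h, by simp⟩
    | succ k ih =>
      obtain ⟨a, b, hab, hle⟩ := ih
      obtain ⟨a', b', hab', hle'⟩ := halve hgeo f c hab
      refine ⟨a', b', hab', ?_⟩
      calc dist a' b' ≤ dist a b / 2 := hle'
      _ ≤ dist x y / 2 ^ k / 2 := by linarith
      _ = dist x y / 2 ^ (k+1) := by ring
  obtain ⟨k, hk⟩ := pow_unbounded_of_one_lt (dist x y / δ) (by norm_num : (1:ℝ) < 2)
  obtain ⟨a, b, hab, hle⟩ := key k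
  refine ⟨a, b, hab, hle.trans (le_of_lt ?_)⟩
  rw [div_lt_iff₀ (by positivity)]
  calc dist x y = dist x y / δ * δ := by field_simp
  _ < 2 ^ k * δ := by
      apply mul_lt_mul_of_pos_right hk hδ
  _ = δ * 2 ^ k := by ring

end Subdiv


/-- on a nonempty compact metric space in which every pair of points
is joined by a unit-speed geodesic, for any Lipschitz map `f` with global
Lipschitz constant `L = L_f(X)`, the maximum stretch set
`λ_f = {x | L_f(x) = L}` is nonempty and closed. -/
theorem maxStretchSet_nonempty_isClosed {X Y : Type*} [MetricSpace X] [MetricSpace Y]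
    [Nonempty X] [CompactSpace X]
    (hgeo : ∀ x y : X, ∃ γ : ℝ → X, γ 0 = x ∧ γ (dist x y) = y ∧
      ∀ s ∈ Icc (0 : ℝ) (dist x y), ∀ t ∈ Icc (0 : ℝ) (dist x y),
        dist (γ s) (γ t) = |s - t|)
    (f : X → Y) (hf : lipConstOn f Set.univ ≠ ⊤) :
    ({ x : X | locLipConst f x = lipConstOn f Set.univ }).Nonempty ∧
      IsClosed { x : X | locLipConst f x = lipConstOn f Set.univ } := by
  have hle : ∀ x : X, locLipConst f x ≤ lipConstOn f Set.univ := locLipConst_le f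
  have hclosed : IsClosed { x : X | locLipConst f x = lipConstOn f Set.univ } := by
    rw [← isOpen_compl_iff, Metric.isOpen_iff]
    intro x hx
    have hlt : locLipConst f x < lipConstOn f Set.univ :=
      lt_of_le_of_ne (hle x) hx
    rw [locLipConst, iInf_lt_iff] at hlt
    obtain ⟨r, hr⟩ := hlt
    rw [iInf_lt_iff] at hr
    obtain ⟨hrpos, hr⟩ := hr
    refine ⟨r/2, half_pos hrpos, fun y hy => ?_⟩
    have hsub : ball y (r/2) ⊆ ball x r := by
      intro z hz
      rw [mem_ball] at hz hy ⊢
      calc dist z x ≤ dist z y + dist y x := dist_triangle _ _ _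
      _ < r/2 + r/2 := add_lt_add hz hy
      _ = r := by ring
    have : locLipConst f y < lipConstOn f Set.univ := by
      calc locLipConst f y ≤ lipConstOn f (ball y (r/2)) :=
            iInf_le_of_le (r/2) (iInf_le_of_le (half_pos hrpos) le_rfl)
      _ ≤ lipConstOn f (ball x r) := lipConstOn_mono f hsub
      _ < lipConstOn f Set.univ := hr
    exact ne_of_lt this
  refine ⟨?_, hclosed⟩
  by_cases hL0 : lipConstOn f Set.univ = 0
  · refine ⟨Classical.arbitrary X, ?_⟩
    show locLipConst f _ = _
    rw [hL0]
    exact le_antisymm (hL0 ▸ hle _) zero_le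
  · have hsel : ∀ n : ℕ, ∃ a b : X,
        (lipConstOn f Set.univ - ENNReal.ofReal (1/(n+1:ℝ))) * edist a b
          < edist (f a) (f b) ∧ dist a b ≤ 1/(n+1:ℝ) := by
      intro n
      set c := lipConstOn f Set.univ - ENNReal.ofReal (1/(n+1:ℝ)) with hc
      have hclt : c < lipConstOn f Set.univ :=
        ENNReal.sub_lt_self hf hL0
          (ne_of_gt (ENNReal.ofReal_pos.mpr (by positivity)))
      have hex : ∃ x y : X, c * edist x y < edist (f x) (f y) := by
        by_contra hcon
        push_neg at hcon
        have : lipConstOn f Set.univ ≤ c := by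
          rw [lipConstOn_def]
          exact sInf_le fun x _ y _ => (hcon x y)
        exact absurd this (not_le.mpr hclt)
      obtain ⟨x, y, hxy⟩ := hex
      exact shrink hgeo f c hxy (by positivity)
    choose a b hab hdist using hsel
    obtain ⟨p, -, φ, hφ, hconv⟩ := isCompact_univ.tendsto_subseq (fun n => mem_univ (a n))
    refine ⟨p, ?_⟩
    show locLipConst f p = lipConstOn f Set.univ
    refine le_antisymm (hle p) ?_
    rw [locLipConst]
    refine le_iInf fun r => le_iInf fun hr => ?_
    set T := lipConstOn f (ball p r) with hT
    have claim : ∀ m : ℕ, lipConstOn f Set.univ - ENNReal.ofReal (1/(m+1:ℝ)) ≤ T := by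
      intro m
      obtain ⟨N1, hN1⟩ := Metric.tendsto_atTop.mp hconv (r/2) (half_pos hr)
      obtain ⟨M, hM⟩ := exists_nat_one_div_lt (half_pos hr)
      set n0 := max N1 (max m M) with hn0
      set k := φ n0 with hk
      have hkn0 : n0 ≤ k := hφ.le_apply
      have hkm : m ≤ k := le_trans (le_trans (le_max_left m M) (le_max_right N1 _)) hkn0
      have hkM : M ≤ k := le_trans (le_trans (le_max_right m M) (le_max_right N1 _)) hkn0
      have hap : dist (a k) p < r/2 := hN1 n0 (le_max_left _ _)
      have habk : dist (a k) (b k) ≤ 1/(M+1:ℝ) := by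
        refine (hdist k).trans ?_
        apply one_div_le_one_div_of_le (by positivity)
        have : (M:ℝ) ≤ k := Nat.cast_le.mpr hkM
        linarith
      have haball : a k ∈ ball p r := by
        rw [mem_ball]
        calc dist (a k) p < r/2 := hap
        _ < r := by linarith
      have hbball : b k ∈ ball p r := by
        rw [mem_ball]
        calc dist (b k) p ≤ dist (b k) (a k) + dist (a k) p := dist_triangle _ _ _
        _ < r/2 + r/2 := by
            rw [dist_comm]
            exact add_lt_add (lt_of_le_of_lt habk hM) hap
        _ = r := by ring
      have hck : lipConstOn f Set.univ - ENNReal.ofReal (1/(k+1:ℝ)) ≤ T :=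
        le_lipConstOn_of_pair f haball hbball (hab k)
      refine le_trans ?_ hck
      apply tsub_le_tsub_left
      apply ENNReal.ofReal_le_ofReal
      apply one_div_le_one_div_of_le (by positivity)
      have : (m:ℝ) ≤ k := Nat.cast_le.mpr hkm
      linarith
    refine ENNReal.le_of_forall_pos_le_add fun ε hε _ => ?_
    obtain ⟨m, hm⟩ := exists_nat_one_div_lt (show (0:ℝ) < (ε:ℝ) from hε)
    have h1 : lipConstOn f Set.univ ≤ T + ENNReal.ofReal (1/(m+1:ℝ)) :=
      tsub_le_iff_right.mp (claim m)
    refine h1.trans (add_le_add_right ?_ T)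
    calc ENNReal.ofReal (1/(m+1:ℝ)) ≤ ENNReal.ofReal (ε:ℝ) :=
          ENNReal.ofReal_le_ofReal hm.le
    _ = (ε : ENNReal) := ENNReal.ofReal_coe_nnreal
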